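/- With A_m and ∂ as above and j^{2m} = ω_{0,2m}, the sets {∂^{2i} j^{2m−2i} : 0 ≤ i ≤ m} and {∂^{2i+1} j^{2m−2i} : 0 ≤ i ≤ m} are bases of A_{2m} and A_{2m+1}, respectively. -/
import Mathlib


/-- The basis symbol `ω_{a,b} = ω_{b,a}`, modelled in `(ℕ × ℕ) →₀ ℂ` as the
single basis vector indexed by the sorted pair. -/
noncomputable def w (a b : ℕ) : (ℕ × ℕ) →₀ ℂ :=
  Finsupp.single (if a ≤ b then (a, b) else (b, a)) 1

/-- The graded piece `A_m`, the span of `{ω_{a,b} : a + b = m}`. -/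
noncomputable def Asp (m : ℕ) : Submodule ℂ ((ℕ × ℕ) →₀ ℂ) :=
  Submodule.span ℂ {x | ∃ a b : ℕ, a + b = m ∧ x = w a b}

open Polynomial

lemma w_symm (a b : ℕ) : w a b = w b a := by
  unfold w
  rcases Nat.lt_trichotomy a b with h | h | h
  · rw [if_pos h.le, if_neg (by omega)]
  · simp [h]
  · rw [if_neg (by omega), if_pos h.le]

noncomputable def phi : ((ℕ × ℕ) →₀ ℂ) →ₗ[ℂ] Polynomial ℂ :=
  Finsupp.linearCombination ℂ (fun p : ℕ × ℕ => (X : Polynomial ℂ) ^ p.1 + X ^ p.2)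

lemma phi_w (a b : ℕ) : phi (w a b) = X ^ a + X ^ b := by
  unfold phi w
  split
  · simp [Finsupp.linearCombination_single]
  · simp [Finsupp.linearCombination_single, add_comm]

/-- span of all the `w`'s -/
noncomputable def T : Submodule ℂ ((ℕ × ℕ) →₀ ℂ) :=
  Submodule.span ℂ {x | ∃ a b : ℕ, x = w a b}

lemma w_mem_T (a b : ℕ) : w a b ∈ T := Submodule.subset_span ⟨a, b, rfl⟩

lemma D_T {D : ((ℕ × ℕ) →₀ ℂ) →ₗ[ℂ] ((ℕ × ℕ) →₀ ℂ)}
    (hD : ∀ a b : ℕ, D (w a b) = w (a + 1) b + w a (b + 1)) :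
    ∀ f ∈ T, D f ∈ T ∧ phi (D f) = (X + 1) * phi f := by
  intro f hf
  induction hf using Submodule.span_induction with
  | mem x hx =>
    obtain ⟨a, b, rfl⟩ := hx
    rw [hD]
    constructor
    · exact T.add_mem (w_mem_T _ _) (w_mem_T _ _)
    · rw [map_add, phi_w, phi_w, phi_w]
      ring
  | zero => simp
  | add x y hx hy ihx ihy =>
    rw [map_add]
    refine ⟨T.add_mem ihx.1 ihy.1, ?_⟩
    rw [map_add, map_add, ihx.2, ihy.2]; ring
  | smul c x hx ihx =>
    rw [map_smul]
    refine ⟨T.smul_mem c ihx.1, ?_⟩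
    rw [map_smul, map_smul, ihx.2, mul_smul_comm]

lemma Dpow_T {D : ((ℕ × ℕ) →₀ ℂ) →ₗ[ℂ] ((ℕ × ℕ) →₀ ℂ)}
    (hD : ∀ a b : ℕ, D (w a b) = w (a + 1) b + w a (b + 1)) (k : ℕ) :
    ∀ f ∈ T, (D ^ k) f ∈ T ∧ phi ((D ^ k) f) = (X + 1) ^ k * phi f := by
  induction k with
  | zero => intro f hf; simp [hf]
  | succ k ih =>
    intro f hf
    obtain ⟨h1, h2⟩ := ih f hf
    obtain ⟨h3, h4⟩ := D_T hD _ h1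
    have he : (D ^ (k + 1)) f = D ((D ^ k) f) := by
      rw [pow_succ', Module.End.mul_apply]
    rw [he]
    exact ⟨h3, by rw [h4, h2, pow_succ]; ring⟩

/-- the key independence lemma for polynomials `r i * X ^ k i`. -/
lemma indep_pows {n : ℕ} (k : Fin n → ℕ) (hk : StrictMono k) (r : Fin n → Polynomial ℂ)
    (hr : ∀ i, (r i).coeff 0 ≠ 0) :
    LinearIndependent ℂ (fun i => r i * X ^ (k i)) := by
  rw [linearIndependent_iff']
  intro s g hg
  have key : ∀ N : ℕ, ∀ i ∈ s, (i : ℕ) = N → g i = 0 := by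
    intro N
    induction N using Nat.strong_induction_on with
    | _ N ih =>
      intro i hi hiN
      have hcoeff : ((∑ j ∈ s, g j • (r j * X ^ (k j))).coeff (k i)) = 0 := by
        rw [hg]; simp
      rw [finset_sum_coeff] at hcoeff
      have hzero : ∀ j ∈ s, j ≠ i → (g j • (r j * X ^ (k j))).coeff (k i) = 0 := by
        intro j hj hji
        rcases lt_or_gt_of_ne hji with h | h
        · have hz : g j = 0 :=
            ih j.val (by simpa [Fin.lt_def, hiN] using h) j hj rfl
          simp [hz]
        · rw [coeff_smul, coeff_mul_X_pow', if_neg (not_le.mpr (hk h)), smul_zero]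
      rw [Finset.sum_eq_single_of_mem i hi hzero] at hcoeff
      rw [coeff_smul, coeff_mul_X_pow', if_pos le_rfl, Nat.sub_self, smul_eq_mul] at hcoeff
      exact (mul_eq_zero.mp hcoeff).resolve_right (hr i)
  exact fun i hi => key i.val i hi rfl

noncomputable def psi : ((ℕ × ℕ) →₀ ℂ) →ₗ[ℂ] Polynomial ℂ :=
  (Polynomial.aeval (X - 1 : Polynomial ℂ)).toLinearMap ∘ₗ phi

lemma D_Asp {D : ((ℕ × ℕ) →₀ ℂ) →ₗ[ℂ] ((ℕ × ℕ) →₀ ℂ)}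
    (hD : ∀ a b : ℕ, D (w a b) = w (a + 1) b + w a (b + 1)) (t : ℕ) :
    ∀ f ∈ Asp t, D f ∈ Asp (t + 1) := by
  intro f hf
  induction hf using Submodule.span_induction with
  | mem x hx =>
    obtain ⟨a, b, hab, rfl⟩ := hx
    rw [hD]
    exact (Asp (t+1)).add_mem
      (Submodule.subset_span ⟨a + 1, b, by omega, rfl⟩)
      (Submodule.subset_span ⟨a, b + 1, by omega, rfl⟩)
  | zero => simp
  | add x y hx hy ihx ihy => rw [map_add]; exact (Asp (t+1)).add_mem ihx ihy
  | smul c x hx ihx => rw [map_smul]; exact (Asp (t+1)).smul_mem c ihx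

lemma Dpow_Asp {D : ((ℕ × ℕ) →₀ ℂ) →ₗ[ℂ] ((ℕ × ℕ) →₀ ℂ)}
    (hD : ∀ a b : ℕ, D (w a b) = w (a + 1) b + w a (b + 1)) (k : ℕ) :
    ∀ t : ℕ, ∀ f ∈ Asp t, (D ^ k) f ∈ Asp (t + k) := by
  induction k with
  | zero => intro t f hf; simpa using hf
  | succ k ih =>
    intro t f hf
    have he : (D ^ (k + 1)) f = D ((D ^ k) f) := by
      rw [pow_succ', Module.End.mul_apply]
    rw [he, show t + (k + 1) = (t + k) + 1 by omega]
    exact D_Asp hD (t + k) _ (ih t f hf)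

lemma Asp_span_range (m M : ℕ) (h1 : m ≤ M) (h2 : M ≤ 2 * m + 1) :
    Asp M = Submodule.span ℂ (Set.range fun i : Fin (m + 1) => w i (M - i)) := by
  apply le_antisymm
  · rw [Asp, Submodule.span_le]
    rintro x ⟨a, b, hab, rfl⟩
    rcases le_total a b with h | h
    · have ham : a ≤ m := by omega
      have : w a b = w (⟨a, by omega⟩ : Fin (m + 1)) (M - (⟨a, by omega⟩ : Fin (m + 1))) := by
        simp only [Fin.val_mk]
        congr 1
        omega
      rw [this]
      exact Submodule.subset_span ⟨_, rfl⟩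
    · have hbm : b ≤ m := by omega
      have : w a b = w (⟨b, by omega⟩ : Fin (m + 1)) (M - (⟨b, by omega⟩ : Fin (m + 1))) := by
        rw [w_symm]
        simp only [Fin.val_mk]
        congr 1
        omega
      rw [this]
      exact Submodule.subset_span ⟨_, rfl⟩
  · rw [Submodule.span_le]
    rintro x ⟨i, rfl⟩
    exact Submodule.subset_span ⟨i, M - i, by have := i.isLt; omega, rfl⟩

lemma main_aux (D : ((ℕ × ℕ) →₀ ℂ) →ₗ[ℂ] ((ℕ × ℕ) →₀ ℂ))
    (hD : ∀ a b : ℕ, D (w a b) = w (a + 1) b + w a (b + 1)) (m c : ℕ) (hc : c ≤ 1) :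
    LinearIndependent ℂ
        (fun i : Fin (m + 1) => (D ^ (2 * (i : ℕ) + c)) (w 0 (2 * m - 2 * (i : ℕ)))) ∧
      Submodule.span ℂ
          (Set.range fun i : Fin (m + 1) =>
            (D ^ (2 * (i : ℕ) + c)) (w 0 (2 * m - 2 * (i : ℕ)))) = Asp (2 * m + c) := by
  set v : Fin (m + 1) → ((ℕ × ℕ) →₀ ℂ) :=
    fun i => (D ^ (2 * (i : ℕ) + c)) (w 0 (2 * m - 2 * (i : ℕ))) with hv
  -- compute psi of v i
  have hpsi : ∀ i : Fin (m + 1),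
      psi (v i) = (1 + (X - 1) ^ (2 * m - 2 * (i : ℕ))) * X ^ (2 * (i : ℕ) + c) := by
    intro i
    have h := (Dpow_T hD (2 * (i : ℕ) + c) (w 0 (2 * m - 2 * (i : ℕ))) (w_mem_T _ _)).2
    rw [phi_w] at h
    show (Polynomial.aeval (X - 1 : Polynomial ℂ)) (phi (v i)) = _
    rw [hv, h]
    simp only [map_mul, map_pow, map_add, Polynomial.aeval_X, map_one, pow_zero]
    ring
  -- linear independence
  have hind : LinearIndependent ℂ v := by
    have hk : StrictMono (fun i : Fin (m + 1) => 2 * (i : ℕ) + c) := by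
      intro i j h
      have : (i : ℕ) < (j : ℕ) := h
      show 2 * (i : ℕ) + c < 2 * (j : ℕ) + c
      omega
    have hr : ∀ i : Fin (m + 1),
        ((1 : Polynomial ℂ) + (X - 1) ^ (2 * m - 2 * (i : ℕ))).coeff 0 ≠ 0 := by
      intro i
      rw [Polynomial.coeff_zero_eq_eval_zero]
      have he : Even (2 * m - 2 * (i : ℕ)) := ⟨m - i, by omega⟩
      simp [he.neg_one_pow]
    have hip := indep_pows _ hk _ hr
    have hcomp : ⇑psi ∘ v = fun i : Fin (m + 1) =>
        ((1 : Polynomial ℂ) + (X - 1) ^ (2 * m - 2 * (i : ℕ))) * X ^ (2 * (i : ℕ) + c) :=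
      funext fun i => hpsi i
    exact LinearIndependent.of_comp psi (hcomp ▸ hip)
  refine ⟨hind, ?_⟩
  -- membership
  have hmem : ∀ i : Fin (m + 1), v i ∈ Asp (2 * m + c) := by
    intro i
    have h0 : w 0 (2 * m - 2 * (i : ℕ)) ∈ Asp (2 * m - 2 * (i : ℕ)) :=
      Submodule.subset_span ⟨0, 2 * m - 2 * (i : ℕ), by omega, rfl⟩
    have := Dpow_Asp hD (2 * (i : ℕ) + c) _ _ h0
    have heq : (2 * m - 2 * (i : ℕ)) + (2 * (i : ℕ) + c) = 2 * m + c := by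
      have := i.isLt; omega
    rwa [heq] at this
  have hle : Submodule.span ℂ (Set.range v) ≤ Asp (2 * m + c) := by
    rw [Submodule.span_le]
    rintro x ⟨i, rfl⟩
    exact hmem i
  -- dimension count
  have hAspEq := Asp_span_range m (2 * m + c) (by omega) (by omega)
  have hfin : FiniteDimensional ℂ (Asp (2 * m + c)) := by
    rw [hAspEq]
    exact FiniteDimensional.span_of_finite ℂ (Set.finite_range _)
  have hrank1 : Module.finrank ℂ (Asp (2 * m + c)) ≤ m + 1 := by
    rw [hAspEq]
    refine le_trans (finrank_span_le_card _) ?_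
    rw [Set.toFinset_range]
    exact le_trans (Finset.card_image_le) (by simp)
  have hrank2 : Module.finrank ℂ (Submodule.span ℂ (Set.range v)) = m + 1 := by
    rw [finrank_span_eq_card hind, Fintype.card_fin]
  exact Submodule.eq_of_le_of_finrank_le hle (by omega)

/-- With `∂(ω_{a,b}) = ω_{a+1,b} + ω_{a,b+1}` and `j^{2m} = ω_{0,2m}`, the sets
`{∂^{2i} j^{2m−2i} : 0 ≤ i ≤ m}` and `{∂^{2i+1} j^{2m−2i} : 0 ≤ i ≤ m}` are bases
of `A_{2m}` and `A_{2m+1}` respectively. -/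
theorem derivative_bases (D : ((ℕ × ℕ) →₀ ℂ) →ₗ[ℂ] ((ℕ × ℕ) →₀ ℂ))
    (hD : ∀ a b : ℕ, D (w a b) = w (a + 1) b + w a (b + 1)) (m : ℕ) :
    (LinearIndependent ℂ
        (fun i : Fin (m + 1) => (D ^ (2 * (i : ℕ))) (w 0 (2 * m - 2 * (i : ℕ)))) ∧
      Submodule.span ℂ
          (Set.range fun i : Fin (m + 1) =>
            (D ^ (2 * (i : ℕ))) (w 0 (2 * m - 2 * (i : ℕ)))) = Asp (2 * m)) ∧
    (LinearIndependent ℂ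
        (fun i : Fin (m + 1) => (D ^ (2 * (i : ℕ) + 1)) (w 0 (2 * m - 2 * (i : ℕ)))) ∧
      Submodule.span ℂ
          (Set.range fun i : Fin (m + 1) =>
            (D ^ (2 * (i : ℕ) + 1)) (w 0 (2 * m - 2 * (i : ℕ)))) = Asp (2 * m + 1)) := by
  refine ⟨?_, main_aux D hD m 1 le_rfl⟩
  have h := main_aux D hD m 0 (by omega)
  simpa using h
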